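/- Let (X, P_X), (Y, P_Y), (Z, P_Z) be finite metric measure spaces equipped with m-pointed partitions, with μ_X, μ_Y, μ_Z fully supported. Let μ^{XY} ∈ C_{P_X,P_Y}(μ_X, μ_Y) and μ^{YZ} ∈ C_{P_Y,P_Z}(μ_Y, μ_Z) be quantization couplings. Then the glued measure μ^{XZ}(x,z) := Σ_{y ∈ Y} μ^{XY}(x,y) μ^{YZ}(y,z) / μ_Y(y) is a quantization coupling: μ^{XZ} ∈ C_{P_X,P_Z}(μ_X, μ_Z). -/

import Mathlib

open Finset

noncomputable section

/-- A probability vector on a finite type. -/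
def IsProb {X : Type*} [Fintype X] (μ : X → ℝ) : Prop :=
  (∀ x, 0 ≤ μ x) ∧ (∑ x, μ x) = 1

/-- `μ` is a coupling of the probability vectors `μX` and `μY`. -/
def IsCoupling {X Y : Type*} [Fintype X] [Fintype Y]
    (μX : X → ℝ) (μY : Y → ℝ) (μ : X → Y → ℝ) : Prop :=
  (∀ x y, 0 ≤ μ x y) ∧ (∀ x, (∑ y, μ x y) = μX x) ∧ (∀ y, (∑ x, μ x y) = μY y)

/-- The Gromov–Wasserstein loss of a coupling, for given distance functions. -/
def GWLoss {X Y : Type*} [Fintype X] [Fintype Y]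
    (dX : X → X → ℝ) (dY : Y → Y → ℝ) (μ : X → Y → ℝ) : ℝ :=
  ∑ x, ∑ y, ∑ x', ∑ y', (dX x x' - dY y y') ^ 2 * μ x y * μ x' y'

/-- The Gromov–Wasserstein distance between two finite mm-spaces. -/
def dGW {X Y : Type*} [Fintype X] [Fintype Y]
    (dX : X → X → ℝ) (dY : Y → Y → ℝ) (μX : X → ℝ) (μY : Y → ℝ) : ℝ :=
  sInf {r : ℝ | ∃ μ, IsCoupling μX μY μ ∧ r = Real.sqrt (GWLoss dX dY μ)}

/-- An `m`-pointed partition of `X`: each point is assigned to one of `m` blocks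
(`part`), and each block `p` has a distinguished representative `rep p` lying in it.
Blocks are the fibers of `part`; they are disjoint, cover `X`, and are nonempty. -/
structure PointedPartition (X : Type*) (m : ℕ) where
  part : X → Fin m
  rep : Fin m → X
  part_rep : ∀ p, part (rep p) = p

/-- The mass `μ_X(Uᵖ)` of the block `Uᵖ`; as a function of `p` this is the measure
`μ_{P_X}` of the quantized representation `Xᵐ` (identified with `Fin m`). -/
def blockMass {X : Type*} [Fintype X] (μX : X → ℝ) {m : ℕ}
    (P : PointedPartition X m) (p : Fin m) : ℝ :=
  ∑ x, if P.part x = p then μX x else 0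

/-- The normalized measure `μ_{Uᵖ} = μ_X|_{Uᵖ} / μ_X(Uᵖ)` of a block, extended by zero
to all of `X` (this is `μ̄_{Uᵖ}`). -/
def blockMeasure {X : Type*} [Fintype X] (μX : X → ℝ) {m : ℕ}
    (P : PointedPartition X m) (p : Fin m) (x : X) : ℝ :=
  if P.part x = p then μX x / blockMass μX P p else 0

/-- `μ` is a quantization coupling: `μ(x,y) = Σ_{p,q} μm(xᵖ,y^q) μ̄_{xᵖ,y^q}(x,y)` where
`μm` couples the quantized measures and each `ν p q` is (the extension by zero of) a
coupling of the block measures with `ν p q (xᵖ, y^q) > 0`. -/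
def IsQuantCoupling {X Y : Type*} [Fintype X] [Fintype Y] {m : ℕ}
    (μX : X → ℝ) (μY : Y → ℝ)
    (PX : PointedPartition X m) (PY : PointedPartition Y m)
    (μ : X → Y → ℝ) : Prop :=
  ∃ (μm : Fin m → Fin m → ℝ) (ν : Fin m → Fin m → X → Y → ℝ),
    IsCoupling (blockMass μX PX) (blockMass μY PY) μm ∧
    (∀ p q, IsCoupling (blockMeasure μX PX p) (blockMeasure μY PY q) (ν p q)) ∧
    (∀ p q, 0 < ν p q (PX.rep p) (PY.rep q)) ∧
    (∀ x y, μ x y = ∑ p, ∑ q, μm p q * ν p q x y)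

/-- The quantized Gromov–Wasserstein distance between `m`-pointed mm-spaces. -/
def dqGW {X Y : Type*} [Fintype X] [Fintype Y] {m : ℕ}
    (dX : X → X → ℝ) (dY : Y → Y → ℝ) (μX : X → ℝ) (μY : Y → ℝ)
    (PX : PointedPartition X m) (PY : PointedPartition Y m) : ℝ :=
  sInf {r : ℝ | ∃ μ, IsQuantCoupling μX μY PX PY μ ∧ r = Real.sqrt (GWLoss dX dY μ)}

/-- The quantized eccentricity `q(P_X) = (Σ_p μ_X(Uᵖ) s_{Uᵖ}(xᵖ)²)^{1/2}`, where
`s_{Uᵖ}(xᵖ)² = Σ_{x ∈ Uᵖ} d_X(xᵖ,x)² μ_{Uᵖ}(x)`. -/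
def qEcc {X : Type*} [Fintype X] (dX : X → X → ℝ) (μX : X → ℝ) {m : ℕ}
    (P : PointedPartition X m) : ℝ :=
  Real.sqrt (∑ p, blockMass μX P p * ∑ x, dX (P.rep p) x ^ 2 * blockMeasure μX P p x)

/-- The `m`-quantized eccentricity `q_m(X)`: minimum of `q(P_X)` over `m`-pointed
partitions. -/
def qEccMin (X : Type*) [Fintype X] (dX : X → X → ℝ) (μX : X → ℝ) (m : ℕ) : ℝ :=
  sInf {r : ℝ | ∃ P : PointedPartition X m, r = qEcc dX μX P}

end

section GlueHelpers

variable {X Y Z : Type*} [Fintype X] [Fintype Y] [Fintype Z]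

lemma coupling_zero_of_snd {α : X → ℝ} {β : Y → ℝ} {ν : X → Y → ℝ}
    (h : IsCoupling α β ν) {y : Y} (hy : β y = 0) (x : X) : ν x y = 0 := by
  have hs := h.2.2 y
  rw [hy] at hs
  exact (Finset.sum_eq_zero_iff_of_nonneg (fun x _ => h.1 x y)).1 hs x (Finset.mem_univ x)

lemma coupling_zero_of_fst {α : X → ℝ} {β : Y → ℝ} {ν : X → Y → ℝ}
    (h : IsCoupling α β ν) {x : X} (hx : α x = 0) (y : Y) : ν x y = 0 := by
  have hs := h.2.1 x
  rw [hx] at hs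
  exact (Finset.sum_eq_zero_iff_of_nonneg (fun y _ => h.1 x y)).1 hs y (Finset.mem_univ y)

lemma coupling_snd_nonneg {α : X → ℝ} {β : Y → ℝ} {ν : X → Y → ℝ}
    (h : IsCoupling α β ν) (y : Y) : 0 ≤ β y := by
  rw [← h.2.2 y]
  exact Finset.sum_nonneg fun x _ => h.1 x y

/-- Gluing two couplings along the middle measure yields a coupling. -/
lemma glue_isCoupling {α : X → ℝ} {β : Y → ℝ} {γ : Z → ℝ}
    {ν1 : X → Y → ℝ} {ν2 : Y → Z → ℝ}
    (h1 : IsCoupling α β ν1) (h2 : IsCoupling β γ ν2) :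
    IsCoupling α γ (fun x z => ∑ y, ν1 x y * ν2 y z / β y) := by
  have hβ : ∀ y, 0 ≤ β y := coupling_snd_nonneg h1
  refine ⟨fun x z => Finset.sum_nonneg fun y _ =>
    div_nonneg (mul_nonneg (h1.1 x y) (h2.1 y z)) (hβ y), ?_, ?_⟩
  · intro x
    calc ∑ z, ∑ y, ν1 x y * ν2 y z / β y
        = ∑ y, ∑ z, ν1 x y * ν2 y z / β y := Finset.sum_comm
      _ = ∑ y, ν1 x y * β y / β y := by
          refine Finset.sum_congr rfl fun y _ => ?_
          rw [← Finset.sum_div, ← Finset.mul_sum, h2.2.1 y]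
      _ = ∑ y, ν1 x y := by
          refine Finset.sum_congr rfl fun y _ => ?_
          rcases eq_or_ne (β y) 0 with h0 | h0
          · rw [coupling_zero_of_snd h1 h0 x, zero_mul, zero_div]
          · rw [mul_div_assoc, div_self h0, mul_one]
      _ = α x := h1.2.1 x
  · intro z
    calc ∑ x, ∑ y, ν1 x y * ν2 y z / β y
        = ∑ y, ∑ x, ν1 x y * ν2 y z / β y := Finset.sum_comm
      _ = ∑ y, β y * ν2 y z / β y := by
          refine Finset.sum_congr rfl fun y _ => ?_
          rw [← Finset.sum_div, ← Finset.sum_mul, h1.2.2 y]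
      _ = ∑ y, ν2 y z := by
          refine Finset.sum_congr rfl fun y _ => ?_
          rcases eq_or_ne (β y) 0 with h0 | h0
          · rw [coupling_zero_of_fst h2 h0 z, mul_zero, zero_div]
          · rw [mul_comm, mul_div_assoc, div_self h0, mul_one]
      _ = γ z := h2.2.2 z

lemma blockMass_pos (μX : X → ℝ) (hpos : ∀ x, 0 < μX x)
    {m : ℕ} (P : PointedPartition X m) (p : Fin m) : 0 < blockMass μX P p := by
  have hle : μX (P.rep p) ≤ blockMass μX P p := by
    have := Finset.single_le_sum (f := fun x => if P.part x = p then μX x else 0)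
      (fun x _ => by split_ifs with h; exacts [(hpos x).le, le_rfl])
      (Finset.mem_univ (P.rep p))
    simpa [blockMass, P.part_rep p] using this
  exact lt_of_lt_of_le (hpos (P.rep p)) hle

lemma blockMeasure_nonneg (μX : X → ℝ) (hpos : ∀ x, 0 < μX x)
    {m : ℕ} (P : PointedPartition X m) (p : Fin m) (x : X) :
    0 ≤ blockMeasure μX P p x := by
  unfold blockMeasure
  split_ifs with h
  · exact div_nonneg (hpos x).le (blockMass_pos μX hpos P p).le
  · exact le_rfl

lemma blockMeasure_rep_pos (μX : X → ℝ) (hpos : ∀ x, 0 < μX x)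
    {m : ℕ} (P : PointedPartition X m) (p : Fin m) :
    0 < blockMeasure μX P p (P.rep p) := by
  unfold blockMeasure
  rw [if_pos (P.part_rep p)]
  exact div_pos (hpos (P.rep p)) (blockMass_pos μX hpos P p)

lemma blockMeasure_sum_one (μX : X → ℝ) (hpos : ∀ x, 0 < μX x)
    {m : ℕ} (P : PointedPartition X m) (p : Fin m) :
    ∑ x, blockMeasure μX P p x = 1 := by
  have hM := (blockMass_pos μX hpos P p).ne'
  calc ∑ x, blockMeasure μX P p x
      = ∑ x, (if P.part x = p then μX x else 0) / blockMass μX P p := by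
        refine Finset.sum_congr rfl fun x _ => ?_
        unfold blockMeasure
        split_ifs <;> simp
    _ = blockMass μX P p / blockMass μX P p := by rw [← Finset.sum_div]; rfl
    _ = 1 := div_self hM

lemma blockMeasure_eq_zero (μX : X → ℝ) {m : ℕ} (P : PointedPartition X m)
    {p : Fin m} {x : X} (h : P.part x ≠ p) : blockMeasure μX P p x = 0 := by
  unfold blockMeasure
  rw [if_neg h]

end GlueHelpers

/-- gluing two quantization couplings along `Y` yields a quantization
coupling of `X` and `Z`. -/
theorem glued_quantization_coupling
    {X Y Z : Type*} [Fintype X] [Fintype Y] [Fintype Z]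
    [MetricSpace X] [MetricSpace Y] [MetricSpace Z] {m : ℕ}
    (μX : X → ℝ) (μY : Y → ℝ) (μZ : Z → ℝ)
    (hμX : IsProb μX) (hμY : IsProb μY) (hμZ : IsProb μZ)
    (hXpos : ∀ x, 0 < μX x) (hYpos : ∀ y, 0 < μY y) (hZpos : ∀ z, 0 < μZ z)
    (PX : PointedPartition X m) (PY : PointedPartition Y m) (PZ : PointedPartition Z m)
    (μXY : X → Y → ℝ) (μYZ : Y → Z → ℝ)
    (hXY : IsQuantCoupling μX μY PX PY μXY)
    (hYZ : IsQuantCoupling μY μZ PY PZ μYZ) :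
    IsQuantCoupling μX μZ PX PZ (fun x z => ∑ y, μXY x y * μYZ y z / μY y) := by
  classical
  obtain ⟨μ1, ν1, h1c, h1ν, h1pos, h1eq⟩ := hXY
  obtain ⟨μ2, ν2, h2c, h2ν, h2pos, h2eq⟩ := hYZ
  have hbY : ∀ q, 0 < blockMass μY PY q := blockMass_pos μY hYpos PY
  -- glued block couplings
  set g : Fin m → Fin m → Fin m → X → Z → ℝ :=
    fun p q r x z => ∑ y, ν1 p q x y * ν2 q r y z / blockMeasure μY PY q y with hgdef
  have hg : ∀ p q r, IsCoupling (blockMeasure μX PX p) (blockMeasure μZ PZ r) (g p q r) :=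
    fun p q r => glue_isCoupling (h1ν p q) (h2ν q r)
  -- coefficients
  set c : Fin m → Fin m → Fin m → ℝ :=
    fun p r q => μ1 p q * μ2 q r / blockMass μY PY q with hcdef
  have hc0 : ∀ p r q, 0 ≤ c p r q := fun p r q =>
    div_nonneg (mul_nonneg (h1c.1 p q) (h2c.1 q r)) (hbY q).le
  set μm : Fin m → Fin m → ℝ := fun p r => ∑ q, c p r q with hμmdef
  have hμm0 : ∀ p r, 0 ≤ μm p r := fun p r => Finset.sum_nonneg fun q _ => hc0 p r q
  -- μm is a coupling of the block masses
  have hμmc : IsCoupling (blockMass μX PX) (blockMass μZ PZ) μm := by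
    refine ⟨hμm0, ?_, ?_⟩
    · intro p
      calc ∑ r, μm p r = ∑ q, ∑ r, c p r q := Finset.sum_comm
        _ = ∑ q, μ1 p q := by
            refine Finset.sum_congr rfl fun q _ => ?_
            simp only [hcdef]
            rw [← Finset.sum_div, ← Finset.mul_sum, h2c.2.1 q, mul_div_assoc,
              div_self (hbY q).ne', mul_one]
        _ = blockMass μX PX p := h1c.2.1 p
    · intro r
      calc ∑ p, μm p r = ∑ q, ∑ p, c p r q := by
            rw [Finset.sum_comm (s := Finset.univ) (t := Finset.univ)]
        _ = ∑ q, μ2 q r := by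
            refine Finset.sum_congr rfl fun q _ => ?_
            simp only [hcdef]
            rw [← Finset.sum_div, ← Finset.sum_mul, h1c.2.2 q, mul_comm, mul_div_assoc,
              div_self (hbY q).ne', mul_one]
        _ = blockMass μZ PZ r := h2c.2.2 r
  -- the block couplings of the glued coupling
  set ν : Fin m → Fin m → X → Z → ℝ := fun p r x z =>
    if μm p r = 0 then blockMeasure μX PX p x * blockMeasure μZ PZ r z
    else (∑ q, c p r q * g p q r x z) / μm p r with hνdef
  have hνc : ∀ p r, IsCoupling (blockMeasure μX PX p) (blockMeasure μZ PZ r) (ν p r) := by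
    intro p r
    by_cases h : μm p r = 0
    · simp only [hνdef, h, if_true, eq_self_iff_true, if_pos]
      exact ⟨fun x z => mul_nonneg (blockMeasure_nonneg μX hXpos PX p x)
          (blockMeasure_nonneg μZ hZpos PZ r z),
        fun x => by rw [← Finset.mul_sum, blockMeasure_sum_one μZ hZpos PZ r, mul_one],
        fun z => by rw [← Finset.sum_mul, blockMeasure_sum_one μX hXpos PX p, one_mul]⟩
    · have hpos : 0 < μm p r := lt_of_le_of_ne (hμm0 p r) (Ne.symm h)
      simp only [hνdef, if_neg h]
      refine ⟨fun x z => div_nonneg (Finset.sum_nonneg fun q _ =>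
        mul_nonneg (hc0 p r q) ((hg p q r).1 x z)) hpos.le, ?_, ?_⟩
      · intro x
        calc ∑ z, (∑ q, c p r q * g p q r x z) / μm p r
            = (∑ q, c p r q * ∑ z, g p q r x z) / μm p r := by
              rw [← Finset.sum_div]
              congr 1
              rw [Finset.sum_comm]
              exact Finset.sum_congr rfl fun q _ => (Finset.mul_sum _ _ _).symm
          _ = (∑ q, c p r q * blockMeasure μX PX p x) / μm p r := by
              congr 1
              exact Finset.sum_congr rfl fun q _ => by rw [(hg p q r).2.1 x]
          _ = blockMeasure μX PX p x := by
              rw [← Finset.sum_mul, mul_comm, mul_div_assoc, div_self h, mul_one]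
      · intro z
        calc ∑ x, (∑ q, c p r q * g p q r x z) / μm p r
            = (∑ q, c p r q * ∑ x, g p q r x z) / μm p r := by
              rw [← Finset.sum_div]
              congr 1
              rw [Finset.sum_comm]
              exact Finset.sum_congr rfl fun q _ => (Finset.mul_sum _ _ _).symm
          _ = (∑ q, c p r q * blockMeasure μZ PZ r z) / μm p r := by
              congr 1
              exact Finset.sum_congr rfl fun q _ => by rw [(hg p q r).2.2 z]
          _ = blockMeasure μZ PZ r z := by
              rw [← Finset.sum_mul, mul_comm, mul_div_assoc, div_self h, mul_one]
  -- positivity at the representatives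
  have hνpos : ∀ p r, 0 < ν p r (PX.rep p) (PZ.rep r) := by
    intro p r
    by_cases h : μm p r = 0
    · simp only [hνdef, h, if_pos]
      exact mul_pos (blockMeasure_rep_pos μX hXpos PX p) (blockMeasure_rep_pos μZ hZpos PZ r)
    · have hpos : 0 < μm p r := lt_of_le_of_ne (hμm0 p r) (Ne.symm h)
      simp only [hνdef, if_neg h]
      refine div_pos ?_ hpos
      obtain ⟨q0, _, hq0⟩ := Finset.exists_ne_zero_of_sum_ne_zero (by rwa [hμmdef] at h)
      have hcq0 : 0 < c p r q0 := lt_of_le_of_ne (hc0 p r q0) (Ne.symm hq0)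
      have hgq0 : 0 < g p q0 r (PX.rep p) (PZ.rep r) := by
        have hterm : 0 < ν1 p q0 (PX.rep p) (PY.rep q0) * ν2 q0 r (PY.rep q0) (PZ.rep r) /
            blockMeasure μY PY q0 (PY.rep q0) :=
          div_pos (mul_pos (h1pos p q0) (h2pos q0 r)) (blockMeasure_rep_pos μY hYpos PY q0)
        refine lt_of_lt_of_le hterm ?_
        exact Finset.single_le_sum (f := fun y => ν1 p q0 (PX.rep p) y * ν2 q0 r y (PZ.rep r) /
            blockMeasure μY PY q0 y)
          (fun y _ => div_nonneg (mul_nonneg ((h1ν p q0).1 _ y) ((h2ν q0 r).1 y _))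
            (coupling_snd_nonneg (h1ν p q0) y))
          (Finset.mem_univ (PY.rep q0))
      calc (0 : ℝ) < c p r q0 * g p q0 r (PX.rep p) (PZ.rep r) := mul_pos hcq0 hgq0
        _ ≤ ∑ q, c p r q * g p q r (PX.rep p) (PZ.rep r) :=
          Finset.single_le_sum (fun q _ => mul_nonneg (hc0 p r q) ((hg p q r).1 _ _))
            (Finset.mem_univ q0)
  refine ⟨μm, ν, hμmc, hνc, hνpos, ?_⟩
  intro x z
  -- pointwise-in-y identity
  have claimY : ∀ y, μXY x y * μYZ y z / μY y =
      ∑ p, ∑ q, ∑ r, c p r q * (ν1 p q x y * ν2 q r y z / blockMeasure μY PY q y) := by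
    intro y
    have hsupp1 : ∀ p q, q ≠ PY.part y → ν1 p q x y = 0 := fun p q hq =>
      coupling_zero_of_snd (h1ν p q) (blockMeasure_eq_zero μY PY (Ne.symm hq)) x
    have hsupp2 : ∀ q r, q ≠ PY.part y → ν2 q r y z = 0 := fun q r hq =>
      coupling_zero_of_fst (h2ν q r) (blockMeasure_eq_zero μY PY (Ne.symm hq)) z
    have hβ : blockMeasure μY PY (PY.part y) y = μY y / blockMass μY PY (PY.part y) := by
      unfold blockMeasure
      rw [if_pos rfl]
    have hXYy : μXY x y = ∑ p, μ1 p (PY.part y) * ν1 p (PY.part y) x y := by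
      rw [h1eq x y]
      refine Finset.sum_congr rfl fun p _ => ?_
      refine Finset.sum_eq_single (PY.part y) (fun q _ hq => ?_) (fun h => absurd (Finset.mem_univ _) h)
      rw [hsupp1 p q hq, mul_zero]
    have hYZy : μYZ y z = ∑ r, μ2 (PY.part y) r * ν2 (PY.part y) r y z := by
      rw [h2eq y z]
      rw [Finset.sum_comm]
      refine Finset.sum_congr rfl fun r _ => ?_
      refine Finset.sum_eq_single (PY.part y) (fun q _ hq => ?_) (fun h => absurd (Finset.mem_univ _) h)
      rw [hsupp2 q r hq, mul_zero]
    calc μXY x y * μYZ y z / μY y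
        = ∑ p, ∑ r, μ1 p (PY.part y) * ν1 p (PY.part y) x y *
            (μ2 (PY.part y) r * ν2 (PY.part y) r y z) / μY y := by
          rw [hXYy, hYZy, Finset.sum_mul_sum, Finset.sum_div]
          exact Finset.sum_congr rfl fun p _ => by rw [Finset.sum_div]
      _ = ∑ p, ∑ r, c p r (PY.part y) *
            (ν1 p (PY.part y) x y * ν2 (PY.part y) r y z / blockMeasure μY PY (PY.part y) y) := by
          refine Finset.sum_congr rfl fun p _ => Finset.sum_congr rfl fun r _ => ?_
          rw [hβ, hcdef]
          have h1 : μY y ≠ 0 := (hYpos y).ne'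
          have h2 : blockMass μY PY (PY.part y) ≠ 0 := (hbY (PY.part y)).ne'
          field_simp
      _ = ∑ p, ∑ q, ∑ r, c p r q *
            (ν1 p q x y * ν2 q r y z / blockMeasure μY PY q y) := by
          refine Finset.sum_congr rfl fun p _ => ?_
          refine (Finset.sum_eq_single (f := fun q => ∑ r, c p r q *
              (ν1 p q x y * ν2 q r y z / blockMeasure μY PY q y)) (PY.part y)
            (fun q _ hq => ?_) (fun h => absurd (Finset.mem_univ _) h)).symm
          refine Finset.sum_eq_zero fun r _ => ?_
          rw [hsupp1 p q hq, zero_mul, zero_div, mul_zero]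
  calc ∑ y, μXY x y * μYZ y z / μY y
      = ∑ y, ∑ p, ∑ q, ∑ r, c p r q * (ν1 p q x y * ν2 q r y z / blockMeasure μY PY q y) :=
        Finset.sum_congr rfl fun y _ => claimY y
    _ = ∑ p, ∑ q, ∑ r, ∑ y, c p r q * (ν1 p q x y * ν2 q r y z / blockMeasure μY PY q y) := by
        rw [Finset.sum_comm]
        refine Finset.sum_congr rfl fun p _ => ?_
        rw [Finset.sum_comm]
        exact Finset.sum_congr rfl fun q _ => Finset.sum_comm
    _ = ∑ p, ∑ q, ∑ r, c p r q * g p q r x z := by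
        refine Finset.sum_congr rfl fun p _ => Finset.sum_congr rfl fun q _ =>
          Finset.sum_congr rfl fun r _ => ?_
        rw [hgdef, ← Finset.mul_sum]
    _ = ∑ p, ∑ r, ∑ q, c p r q * g p q r x z :=
        Finset.sum_congr rfl fun p _ => Finset.sum_comm
    _ = ∑ p, ∑ r, μm p r * ν p r x z := by
        refine Finset.sum_congr rfl fun p _ => Finset.sum_congr rfl fun r _ => ?_
        by_cases h : μm p r = 0
        · have hall : ∀ q ∈ Finset.univ, c p r q = 0 :=
            (Finset.sum_eq_zero_iff_of_nonneg (fun q _ => hc0 p r q)).1 (by rwa [hμmdef] at h)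
          rw [h, zero_mul]
          exact Finset.sum_eq_zero fun q hq => by rw [hall q hq, zero_mul]
        · simp only [hνdef, if_neg h]
          rw [mul_comm, div_mul_cancel₀ _ h]
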